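/- Let A ∈ {0,1}^{n×n} be a decomposable maximal matrix and n = ∏_{j=1}^m p_j^{k_j} the prime factorization of n. Then A admits an (n₁,…,n_ℓ) Kronecker factorization where ℓ = Σ_{j=1}^m k_j and each nᵢ is a prime number; moreover the multiset {n₁,…,n_ℓ} contains each prime p_j exactly k_j times. -/

import Mathlib

namespace KronPaper

/-- Kronecker product of square binary (Bool-valued) matrices. -/
def kron {m n : ℕ} (A : Matrix (Fin m) (Fin m) Bool) (B : Matrix (Fin n) (Fin n) Bool) :
    Matrix (Fin (m * n)) (Fin (m * n)) Bool :=
  Matrix.of fun i j => by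
    have hn : 0 < n := by
      rcases Nat.eq_zero_or_pos n with h | h
      · exact absurd i.isLt (by simp [h])
      · exact h
    exact
      A ⟨i.val / n, Nat.div_lt_of_lt_mul (lt_of_lt_of_eq i.isLt (mul_comm m n))⟩
        ⟨j.val / n, Nat.div_lt_of_lt_mul (lt_of_lt_of_eq j.isLt (mul_comm m n))⟩
      && B ⟨i.val % n, Nat.mod_lt _ hn⟩ ⟨j.val % n, Nat.mod_lt _ hn⟩

/-- Cast a square matrix along an equality of sizes. -/
def castK {m n : ℕ} (h : m = n) (M : Matrix (Fin m) (Fin m) Bool) :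
    Matrix (Fin n) (Fin n) Bool :=
  Matrix.reindex (finCongr h) (finCongr h) M

/-- Iterated Kronecker product of a list of square binary matrices. -/
def kronList : (ns : List ℕ) →
    ((i : Fin ns.length) → Matrix (Fin (ns.get i)) (Fin (ns.get i)) Bool) →
    Matrix (Fin ns.prod) (Fin ns.prod) Bool
  | [], _ => Matrix.of fun _ _ => true
  | _ :: ns, F => kron (F ⟨0, Nat.succ_pos _⟩) (kronList ns fun i => F i.succ)


/-- Square binary matrices of size `n`. -/
abbrev BMat (n : ℕ) := Matrix (Fin n) (Fin n) Bool

lemma castK_apply {m n : ℕ} (h : m = n) (M : BMat m) (i j : Fin n)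
    (h1 : i.val < m) (h2 : j.val < m) :
    castK h M i j = M ⟨i.val, h1⟩ ⟨j.val, h2⟩ := rfl

lemma kron_apply {m n : ℕ} (A : BMat m) (B : BMat n) (i j : Fin (m * n))
    (h1 : i.val / n < m) (h2 : j.val / n < m) (h3 : i.val % n < n) (h4 : j.val % n < n) :
    kron A B i j = (A ⟨i.val / n, h1⟩ ⟨j.val / n, h2⟩ && B ⟨i.val % n, h3⟩ ⟨j.val % n, h4⟩) :=
  rfl

lemma castK_kron_apply {p q n : ℕ} (h : p * q = n) (P : BMat p) (Q : BMat q) (i j : Fin n)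
    (h1 : i.val / q < p) (h2 : j.val / q < p) (h3 : i.val % q < q) (h4 : j.val % q < q) :
    castK h (kron P Q) i j =
      (P ⟨i.val / q, h1⟩ ⟨j.val / q, h2⟩ && Q ⟨i.val % q, h3⟩ ⟨j.val % q, h4⟩) := rfl

lemma kronList_cons (a : ℕ) (ns : List ℕ)
    (F : (i : Fin (a :: ns).length) → BMat ((a :: ns).get i)) :
    kronList (a :: ns) F = kron (F ⟨0, Nat.succ_pos _⟩) (kronList ns fun i => F i.succ) := rfl

lemma kron_false_left {m n : ℕ} (B : BMat n) (i j : Fin (m * n)) :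
    kron (fun _ _ => false : BMat m) B i j = false := rfl

lemma add_mul_lt {r a q p : ℕ} (hr : r < q) (ha : a < p) : r + a * q < p * q := by
  calc r + a * q < q + a * q := by omega
    _ = (a + 1) * q := by ring
    _ ≤ p * q := Nat.mul_le_mul_right q ha

lemma key : ∀ n : ℕ, 2 ≤ n → ∀ A : BMat n,
    (∀ p q, 1 < p → 1 < q → ∀ h : p * q = n,
        ∃ (P : BMat p) (Q : BMat q), A = castK h (kron P Q)) →
    ∃ ns : List ℕ, (∀ p ∈ ns, p.Prime) ∧ List.Perm ns n.primeFactorsList ∧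
      ∃ (h : ns.prod = n) (F : (i : Fin ns.length) → BMat (ns.get i)),
        A = castK h (kronList ns F) := by
  intro n
  induction n using Nat.strong_induction_on with
  | _ n IH =>
  intro hn A hmax
  by_cases hAz : ∀ i j, A i j = false
  · -- A is the zero matrix
    have h2 : n.primeFactorsList = n.minFac :: (n / n.minFac).primeFactorsList := by
      obtain ⟨m, rfl⟩ : ∃ m, n = m + 2 := ⟨n - 2, by omega⟩
      rw [Nat.primeFactorsList]
    refine ⟨n.minFac :: (n / n.minFac).primeFactorsList, ?_, ?_, ?_⟩
    · intro x hx
      rw [← h2] at hx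
      exact Nat.prime_of_mem_primeFactorsList hx
    · rw [← h2]
    · have hprod : (n.minFac :: (n / n.minFac).primeFactorsList).prod = n := by
        rw [← h2]; exact Nat.prod_primeFactorsList (by omega)
      refine ⟨hprod, fun _ => fun _ _ => false, ?_⟩
      funext i j
      rw [hAz i j,
        castK_apply hprod _ i j (lt_of_lt_of_eq i.isLt hprod.symm)
          (lt_of_lt_of_eq j.isLt hprod.symm)]
      exact (kron_false_left _ _ _).symm
  · push_neg at hAz
    obtain ⟨i0, j0, hA0⟩ := hAz
    rw [Bool.ne_false_iff] at hA0
    by_cases hp : n.Prime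
    · -- n prime
      have hget : ∀ i : Fin ([n].length), n = [n].get i := by
        intro i
        obtain ⟨iv, hlt⟩ := i
        have h1 : iv = 0 := by simpa using hlt
        subst h1
        rfl
      have hprod : List.prod [n] = n := by simp
      refine ⟨[n], by simpa using hp, ?_, hprod, fun i => castK (hget i) A, ?_⟩
      · rw [Nat.primeFactorsList_prime hp]
      funext i j
      have pf1 : i.val / 1 < n := by rw [Nat.div_one]; exact i.isLt
      have pf2 : j.val / 1 < n := by rw [Nat.div_one]; exact j.isLt
      have hrfl : castK hprod (kronList [n] (fun i => castK (hget i) A)) i j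
          = (A ⟨i.val / 1, pf1⟩ ⟨j.val / 1, pf2⟩ && true) := rfl
      rw [hrfl, Bool.and_true]
      have e1 : (⟨i.val / 1, pf1⟩ : Fin n) = i := Fin.ext (Nat.div_one _)
      have e2 : (⟨j.val / 1, pf2⟩ : Fin n) = j := Fin.ext (Nat.div_one _)
      rw [e1, e2]
    · -- n composite
      have hpfac : (n.minFac).Prime := Nat.minFac_prime (by omega)
      obtain ⟨q, hpq⟩ : ∃ q, n.minFac * q = n :=
        ⟨n / n.minFac, Nat.mul_div_cancel' (Nat.minFac_dvd n)⟩
      set p := n.minFac with hpdef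
      have hp2 : 2 ≤ p := hpfac.two_le
      have hq0 : q ≠ 0 := by rintro rfl; rw [mul_zero] at hpq; omega
      have hq1 : q ≠ 1 := by rintro rfl; rw [mul_one] at hpq; exact hp (hpq ▸ hpfac)
      have hq2 : 2 ≤ q := by omega
      have hq0' : 0 < q := by omega
      obtain ⟨P, Q, hA⟩ := hmax p q (by omega) (by omega) hpq
      have hb1 : ∀ i : Fin n, i.val / q < p := fun i =>
        Nat.div_lt_of_lt_mul (lt_of_lt_of_eq i.isLt (by rw [← hpq, mul_comm]))
      have hb2 : ∀ i : Fin n, i.val % q < q := fun _ => Nat.mod_lt _ hq0'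
      have hAe : ∀ i j : Fin n, A i j =
          (P ⟨i.val / q, hb1 i⟩ ⟨j.val / q, hb1 j⟩ &&
           Q ⟨i.val % q, hb2 i⟩ ⟨j.val % q, hb2 j⟩) := fun i j => by
        rw [hA]; rfl
      rw [hAe i0 j0] at hA0
      obtain ⟨hP0', -⟩ := Bool.and_eq_true_iff.mp hA0
      obtain ⟨a₀, b₀, hP0⟩ : ∃ a b : Fin p, P a b = true := ⟨_, _, hP0'⟩
      have hIlt : ∀ (i : Fin q) (a : Fin p), i.val + a.val * q < n := fun i a =>
        hpq ▸ add_mul_lt i.isLt a.isLt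
      have hsub : ∀ i j : Fin q,
          A ⟨i.val + a₀.val * q, hIlt i a₀⟩ ⟨j.val + b₀.val * q, hIlt j b₀⟩ = Q i j := by
        intro i j
        rw [hAe]
        refine Eq.trans (congrArg₂ (· && ·)
          (congrArg₂ P
            (Fin.ext (show (i.val + a₀.val * q) / q = a₀.val by
              rw [Nat.add_mul_div_right _ _ hq0', Nat.div_eq_of_lt i.isLt, zero_add]))
            (Fin.ext (show (j.val + b₀.val * q) / q = b₀.val by
              rw [Nat.add_mul_div_right _ _ hq0', Nat.div_eq_of_lt j.isLt, zero_add])))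
          (congrArg₂ Q
            (Fin.ext (show (i.val + a₀.val * q) % q = i.val by
              rw [Nat.add_mul_mod_self_right, Nat.mod_eq_of_lt i.isLt]))
            (Fin.ext (show (j.val + b₀.val * q) % q = j.val by
              rw [Nat.add_mul_mod_self_right, Nat.mod_eq_of_lt j.isLt])))) ?_
        rw [hP0]; exact rfl
      -- Q is itself maximal
      have hmaxQ : ∀ q₁ q₂, 1 < q₁ → 1 < q₂ → ∀ h12 : q₁ * q₂ = q,
          ∃ (Q₁ : BMat q₁) (Q₂ : BMat q₂), Q = castK h12 (kron Q₁ Q₂) := by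
        intro q₁ q₂ hq₁ hq₂ h12
        subst h12
        have hq₂0 : 0 < q₂ := by omega
        have h' : (p * q₁) * q₂ = n := by rw [mul_assoc]; exact hpq
        have hpq₁ : 1 < p * q₁ := by
          calc 1 < q₁ := hq₁
            _ ≤ p * q₁ := Nat.le_mul_of_pos_left _ (by omega)
        obtain ⟨R, S, hA2⟩ := hmax (p * q₁) q₂ hpq₁ (by omega) h'
        have hb1' : ∀ i : Fin n, i.val / q₂ < p * q₁ := fun i =>
          Nat.div_lt_of_lt_mul (lt_of_lt_of_eq i.isLt (by rw [← h', mul_comm]))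
        have hb2' : ∀ i : Fin n, i.val % q₂ < q₂ := fun _ => Nat.mod_lt _ hq₂0
        have hAe2 : ∀ i j : Fin n, A i j =
            (R ⟨i.val / q₂, hb1' i⟩ ⟨j.val / q₂, hb1' j⟩ &&
             S ⟨i.val % q₂, hb2' i⟩ ⟨j.val % q₂, hb2' j⟩) := fun i j => by
          rw [hA2]; rfl
        have hd : ∀ i : Fin (q₁ * q₂), i.val / q₂ < q₁ := fun i =>
          Nat.div_lt_of_lt_mul (lt_of_lt_of_eq i.isLt (mul_comm _ _))
        refine ⟨fun r s => R ⟨r.val + a₀.val * q₁, add_mul_lt r.isLt a₀.isLt⟩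
            ⟨s.val + b₀.val * q₁, add_mul_lt s.isLt b₀.isLt⟩, S, ?_⟩
        funext i j
        rw [← hsub i j, hAe2]
        show _ = (R ⟨i.val / q₂ + a₀.val * q₁, add_mul_lt (hd i) a₀.isLt⟩
            ⟨j.val / q₂ + b₀.val * q₁, add_mul_lt (hd j) b₀.isLt⟩ &&
          S ⟨i.val % q₂, Nat.mod_lt _ hq₂0⟩ ⟨j.val % q₂, Nat.mod_lt _ hq₂0⟩)
        exact congrArg₂ (· && ·)
          (congrArg₂ R
            (Fin.ext (show (i.val + a₀.val * (q₁ * q₂)) / q₂ = i.val / q₂ + a₀.val * q₁ by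
              rw [← mul_assoc, Nat.add_mul_div_right _ _ hq₂0]))
            (Fin.ext (show (j.val + b₀.val * (q₁ * q₂)) / q₂ = j.val / q₂ + b₀.val * q₁ by
              rw [← mul_assoc, Nat.add_mul_div_right _ _ hq₂0])))
          (congrArg₂ S
            (Fin.ext (show (i.val + a₀.val * (q₁ * q₂)) % q₂ = i.val % q₂ by
              rw [← mul_assoc, Nat.add_mul_mod_self_right]))
            (Fin.ext (show (j.val + b₀.val * (q₁ * q₂)) % q₂ = j.val % q₂ by
              rw [← mul_assoc, Nat.add_mul_mod_self_right])))
      -- apply the induction hypothesis to Q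
      have hqlt : q < n := by
        have h2q : q * 2 ≤ q * p := Nat.mul_le_mul_left q hp2
        rw [mul_comm q p, hpq] at h2q
        omega
      obtain ⟨ns', hpr', hperm', hprod', F', hQ⟩ := IH q hqlt hq2 Q hmaxQ
      refine ⟨p :: ns', ?_, ?_, ?_⟩
      · intro x hx
        rcases List.mem_cons.mp hx with rfl | hx
        · exact hpfac
        · exact hpr' x hx
      · have h1 : (p * q).primeFactorsList.Perm
            (p.primeFactorsList ++ q.primeFactorsList) :=
          Nat.perm_primeFactorsList_mul (by omega) hq0
        rw [hpq, Nat.primeFactorsList_prime hpfac] at h1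
        exact (hperm'.cons p).trans h1.symm
      · subst hprod'
        have hprodn : (p :: ns').prod = n := by rw [List.prod_cons]; exact hpq
        refine ⟨hprodn, fun i =>
          match i with
          | ⟨0, _⟩ => P
          | ⟨i' + 1, h⟩ => F' ⟨i', Nat.lt_of_succ_lt_succ h⟩, ?_⟩
        funext i j
        rw [hAe i j, hQ]
        rfl

/-- a decomposable maximal matrix admits a factorization of length
`Ω(n) = Σ kⱼ` whose factor sizes are primes, each prime `pⱼ` occurring exactly `kⱼ`
times (i.e. the list of sizes is a permutation of the prime factors of `n`). -/
theorem maximal_matrix_prime_factorization (n : ℕ) (A : BMat n)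
    (hdec : ∃ p q, 1 < p ∧ 1 < q ∧
        ∃ (h : p * q = n) (P : BMat p) (Q : BMat q), A = castK h (kron P Q))
    (hmax : ∀ p q, 1 < p → 1 < q → ∀ h : p * q = n,
        ∃ (P : BMat p) (Q : BMat q), A = castK h (kron P Q)) :
    ∃ ns : List ℕ,
      (∀ p ∈ ns, p.Prime) ∧
      ns.length = n.primeFactorsList.length ∧
      List.Perm ns n.primeFactorsList ∧
      ∃ (h : ns.prod = n) (F : (i : Fin ns.length) → BMat (ns.get i)),
        A = castK h (kronList ns F) := by
  have hn : 2 ≤ n := by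
    obtain ⟨p, q, hp, hq, h, -⟩ := hdec
    calc 2 ≤ p := hp
      _ ≤ p * q := Nat.le_mul_of_pos_right _ (by omega)
      _ = n := h
  obtain ⟨ns, h1, h2, h3⟩ := key n hn A hmax
  exact ⟨ns, h1, h2.length_eq, h2, h3⟩

end KronPaper
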